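/- Let n be odd and ξ ∈ F_{2^n} nonzero. If Tr(ξ^{-1}) = 0, then the polynomial x^3 + x + ξ has exactly one root in F_{2^n}. -/

import Mathlib

open Polynomial Finset

section Helpers

set_option linter.unusedSectionVars false

variable {F : Type*} [Field F] [Fintype F]

private def trF (n : ℕ) (a : F) : F := ∑ i ∈ Finset.range n, a ^ 2 ^ i

private lemma trF_add [CharP F 2] (n : ℕ) (a b : F) :
    trF n (a + b) = trF n a + trF n b := by
  haveI : Fact (Nat.Prime 2) := ⟨Nat.prime_two⟩
  unfold trF
  rw [← Finset.sum_add_distrib]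
  exact Finset.sum_congr rfl fun i _ => add_pow_char_pow a b 2 i

private lemma trF_sq {n : ℕ} (hF : Fintype.card F = 2 ^ n) (a : F) :
    trF n (a ^ 2) = trF n a := by
  unfold trF
  have h1 : ∀ i : ℕ, (a ^ 2) ^ 2 ^ i = a ^ 2 ^ (i + 1) := by
    intro i; rw [← pow_mul, pow_succ, mul_comm (2 ^ i) 2]
  simp_rw [h1]
  have h2 : ∑ i ∈ Finset.range (n + 1), a ^ 2 ^ i
      = (∑ i ∈ Finset.range n, a ^ 2 ^ (i + 1)) + a ^ 2 ^ 0 :=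
    Finset.sum_range_succ' (fun i => a ^ 2 ^ i) n
  have h3 : ∑ i ∈ Finset.range (n + 1), a ^ 2 ^ i
      = (∑ i ∈ Finset.range n, a ^ 2 ^ i) + a ^ 2 ^ n := Finset.sum_range_succ _ n
  have h4 : a ^ 2 ^ n = a := by rw [← hF]; exact FiniteField.pow_card a
  have h5 : a ^ 2 ^ 0 = a := by norm_num
  rw [h4] at h3
  rw [h5] at h2
  exact add_right_cancel (h2.symm.trans h3)

private lemma trF_one {n : ℕ} (hn : Odd n) [CharP F 2] : trF n (1 : F) = 1 := by
  unfold trF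
  simp only [one_pow, Finset.sum_const, Finset.card_range, nsmul_eq_mul, mul_one]
  obtain ⟨k, hk⟩ := hn
  subst hk
  push_cast
  have h2 : (2 : F) = 0 := by exact_mod_cast CharP.cast_eq_zero F 2
  rw [h2]; ring

private lemma trF_as {n : ℕ} (hF : Fintype.card F = 2 ^ n) [CharP F 2] (z : F) :
    trF n (z ^ 2 + z) = 0 := by
  rw [trF_add, trF_sq hF]
  have h2 : (2 : F) = 0 := by exact_mod_cast CharP.cast_eq_zero F 2
  linear_combination (trF n z) * h2

private lemma half_trace {n : ℕ} (hn : Odd n) (hF : Fintype.card F = 2 ^ n) [CharP F 2]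
    (a : F) (ha : trF n a = 0) : ∃ z : F, z ^ 2 + z = a := by
  haveI : Fact (Nat.Prime 2) := ⟨Nat.prime_two⟩
  obtain ⟨m, hm⟩ := hn
  refine ⟨∑ i ∈ Finset.range (m + 1), a ^ 2 ^ (2 * i), ?_⟩
  have hsq : (∑ i ∈ Finset.range (m + 1), a ^ 2 ^ (2 * i)) ^ 2
      = ∑ i ∈ Finset.range (m + 1), a ^ 2 ^ (2 * i + 1) := by
    have := sum_pow_char (p := 2) (Finset.range (m + 1)) (fun i => a ^ 2 ^ (2 * i))
    rw [this]
    refine Finset.sum_congr rfl fun i _ => ?_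
    rw [← pow_mul, mul_comm (2 ^ (2*i)) 2, ← pow_succ']
  rw [hsq, ← Finset.sum_add_distrib]
  -- ∑ i < m+1, (a^2^(2i+1) + a^2^(2i)) = ∑ j < 2m+2, a^2^j
  have hpair : ∀ M : ℕ, ∑ i ∈ Finset.range M, (a ^ 2 ^ (2 * i + 1) + a ^ 2 ^ (2 * i))
      = ∑ j ∈ Finset.range (2 * M), a ^ 2 ^ j := by
    intro M
    induction M with
    | zero => simp
    | succ k ih =>
      rw [Finset.sum_range_succ, ih]
      have : 2 * (k + 1) = (2 * k + 1) + 1 := by ring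
      rw [this, Finset.sum_range_succ, Finset.sum_range_succ]
      ring
  rw [hpair]
  have h2m : 2 * (m + 1) = n + 1 := by omega
  rw [h2m, Finset.sum_range_succ]
  have h4 : a ^ 2 ^ n = a := by rw [← hF]; exact FiniteField.pow_card a
  rw [h4]
  show trF n a + a = a
  rw [ha, zero_add]

private lemma cube_root {n : ℕ} (hn : Odd n) (hF : Fintype.card F = 2 ^ n)
    (T : F) (hT : T ≠ 0) : ∃ u : F, u ≠ 0 ∧ u ^ 3 = T := by
  have h3dvd : 3 ∣ 2 ^ (n + 1) - 1 := by
    obtain ⟨m, hm⟩ := hn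
    have : n + 1 = 2 * (m + 1) := by omega
    rw [this, pow_mul]
    have : (4 : ℕ) ^ (m + 1) ≡ 1 ^ (m + 1) [MOD 3] := Nat.ModEq.pow _ (by decide)
    have h' : 1 ≡ 4 ^ (m + 1) [MOD 3] := by simpa using this.symm
    exact (Nat.modEq_iff_dvd' (Nat.one_le_pow _ _ (by norm_num))).mp h'
  obtain ⟨e, he⟩ := h3dvd
  refine ⟨T ^ e, pow_ne_zero _ hT, ?_⟩
  rw [← pow_mul]
  have hq1 : T ^ (Fintype.card F - 1) = 1 := FiniteField.pow_card_sub_one_eq_one T hT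
  have hexp : e * 3 = (2 ^ n - 1) * 2 + 1 := by
    have h1 : 1 ≤ 2 ^ n := Nat.one_le_pow _ _ (by norm_num)
    omega
  rw [hexp, pow_add, pow_mul, pow_one, ← hF, hq1, one_pow, one_mul]

end Helpers
theorem stmt_8 (n : ℕ) (hn : Odd n) (F : Type*) [Field F] [Fintype F] [DecidableEq F]
    (hF : Fintype.card F = 2 ^ n) (ξ : F) (hξ : ξ ≠ 0)
    (htr : ∑ i ∈ Finset.range n, ξ⁻¹ ^ 2 ^ i = 0) :
    (X ^ 3 + X + C ξ : F[X]).roots.toFinset.card = 1 := by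
  have hn1 : n ≠ 0 := by rintro rfl; simp [Nat.odd_iff] at hn
  have h2 : (2 : F) = 0 := by
    have hc : ((Fintype.card F : F)) = 0 := FiniteField.cast_card_eq_zero F
    rw [hF] at hc; push_cast at hc
    exact pow_eq_zero_iff hn1 |>.mp hc
  haveI hch : CharP F 2 := by
    have := CharP.ringChar_of_prime_eq_zero Nat.prime_two h2
    rw [← this]; infer_instance
  have htr' : trF n (ξ⁻¹ : F) = 0 := htr
  -- Existence of a root x0
  have htr2 : trF n ((ξ⁻¹ : F) ^ 2) = 0 := by rw [trF_sq hF]; exact htr'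
  obtain ⟨s0, hs0⟩ := half_trace hn hF _ htr2
  have hs0ne : s0 ≠ 0 := by
    intro h
    apply inv_ne_zero hξ
    have h0 : (ξ⁻¹ : F) ^ 2 = 0 := by rw [← hs0, h]; ring
    exact pow_eq_zero_iff two_ne_zero |>.mp h0
  have hinv : ξ * ξ⁻¹ = 1 := mul_inv_cancel₀ hξ
  have hTne : ξ * s0 ≠ 0 := mul_ne_zero hξ hs0ne
  have hTeq : (ξ * s0) ^ 2 + ξ * (ξ * s0) + 1 = 0 := by
    linear_combination ξ ^ 2 * hs0 + (ξ * ξ⁻¹ + 1) * hinv + h2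
  obtain ⟨u, hu0, hu3⟩ := cube_root hn hF _ hTne
  have huinv : u * u⁻¹ = 1 := mul_inv_cancel₀ hu0
  have key : (u ^ 3) ^ 2 + ξ * u ^ 3 + 1 = 0 := by rw [hu3]; exact hTeq
  have hx0 : (u + u⁻¹) ^ 3 + (u + u⁻¹) + ξ = 0 := by
    field_simp
    linear_combination key + (2 * u ^ 4 + 2 * u ^ 2) * h2
  -- Uniqueness
  have huniq : ∀ x y : F, x ^ 3 + x + ξ = 0 → y ^ 3 + y + ξ = 0 → x = y := by
    intro x y hx hy
    by_contra hxy
    have hs : x + y ≠ 0 := fun h => hxy (by linear_combination h - y * h2)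
    have h1 : (x + y) * (x ^ 2 + x * y + y ^ 2 + 1) = 0 := by
      linear_combination hx - hy + (x ^ 2 * y + x * y ^ 2 + y ^ 3 + y) * h2
    have h1' : x ^ 2 + x * y + y ^ 2 + 1 = 0 :=
      (mul_eq_zero.mp h1).resolve_left hs
    have hxi2 : ξ = (x + y) ^ 3 + (x + y) := by
      linear_combination hx - y * h1' + (-x ^ 3 - x ^ 2 * y - x * y ^ 2 - x) * h2
    have hsinv : (x + y) * (x + y)⁻¹ = 1 := mul_inv_cancel₀ hs
    have hw : (x * (x + y)⁻¹) ^ 2 + x * (x + y)⁻¹ = 1 + ((x + y)⁻¹) ^ 2 := by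
      field_simp
      linear_combination h1' + (-x * y - y ^ 2 - 1) * h2
    have trw : trF n ((x * (x + y)⁻¹) ^ 2 + x * (x + y)⁻¹) = 0 := trF_as hF _
    rw [hw, trF_add, trF_one hn, trF_sq hF] at trw
    -- trw : 1 + trF n (x+y)⁻¹ = 0
    have htrs : trF n ((x + y)⁻¹ : F) = 1 := by linear_combination -trw + trF n ((x + y)⁻¹ : F) * h2
    have hy1 : x + y + 1 ≠ 0 := by
      intro h
      exact hξ (by linear_combination hxi2 + ((x + y) ^ 2 - (x + y) + 2) * h - h2)
    have hpf : (ξ⁻¹ : F) = (x + y)⁻¹ + (x + y + 1)⁻¹ + ((x + y + 1)⁻¹) ^ 2 := by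
      field_simp
      linear_combination (-(2 * (x + y) ^ 2 + 4 * (x + y) + 1)) * hxi2
        + (-(x + y) ^ 5 - 2 * (x + y) ^ 4 - (x + y) ^ 3 - (x + y) ^ 2) * h2
    have e1 : trF n (ξ⁻¹ : F)
        = trF n ((x + y)⁻¹ : F) + (trF n ((x + y + 1)⁻¹ : F) + trF n ((x + y + 1)⁻¹ : F)) := by
      rw [hpf, trF_add, trF_add, trF_sq hF]; ring
    rw [htr', htrs] at e1
    have hone : (1 : F) = 0 := by
      linear_combination -e1 - (trF n ((x + y + 1)⁻¹ : F)) * h2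
    exact one_ne_zero hone
  -- Assemble
  have hfne : (X ^ 3 + X + C ξ : F[X]) ≠ 0 := by
    intro h
    have h3 := congrArg (fun p : F[X] => p.coeff 3) h
    simp [coeff_add, coeff_X_pow, coeff_X, coeff_C] at h3
  have hmem : ∀ z : F, z ∈ (X ^ 3 + X + C ξ : F[X]).roots ↔ z ^ 3 + z + ξ = 0 := by
    intro z
    rw [mem_roots hfne]
    simp [IsRoot]
  rw [Finset.card_eq_one]
  refine ⟨u + u⁻¹, ?_⟩
  ext z
  simp only [Multiset.mem_toFinset, Finset.mem_singleton, hmem]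
  constructor
  · intro hz; exact huniq z (u + u⁻¹) hz hx0
  · rintro rfl; exact hx0
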